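/- Let G be a finitely generated group with a free abelian normal subgroup A of finite index, and let π : G → G^{ab} be the abelianization map. Then an element g ∈ G is generalized torsion if and only if π(g) has finite order in G^{ab}. -/

import Mathlib

/-- `g` is a generalized torsion element of `G`: some nonempty finite product of
conjugates of `g` equals the identity. -/
def IsGenTorsion {G : Type*} [Group G] (g : G) : Prop :=
  ∃ xs : List G, xs ≠ [] ∧ (xs.map (fun x => x⁻¹ * g * x)).prod = 1

private lemma of_prod_conj {G : Type*} [Group G] (g : G) (xs : List G) :
    Abelianization.of ((xs.map (fun x => x⁻¹ * g * x)).prod)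
      = (Abelianization.of g) ^ xs.length := by
  induction xs with
  | nil => simp
  | cons a l ih =>
    simp [map_mul, map_inv, ih, pow_succ', inv_mul_cancel_comm]

theorem genTorsion_iff_torsion_abelianization {G : Type*} [Group G] [Group.FG G]
    (A : Subgroup G) [A.Normal] (hfin : A.index ≠ 0)
    (hfree : ∃ n : ℕ, Nonempty (A ≃* Multiplicative (Fin n → ℤ)))
    (g : G) :
    IsGenTorsion g ↔ IsOfFinOrder (Abelianization.of g) := by
  classical
  obtain ⟨nr, ⟨e⟩⟩ := hfree
  haveI : A.FiniteIndex := ⟨hfin⟩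
  letI : CommGroup ↥A :=
    { (inferInstance : Group ↥A) with
      mul_comm := fun a b => e.injective (by rw [map_mul, map_mul, mul_comm]) }
  constructor
  · rintro ⟨xs, hne, hprod⟩
    rw [isOfFinOrder_iff_pow_eq_one]
    exact ⟨xs.length, List.length_pos_iff_ne_nil.mpr hne, by
      rw [← of_prod_conj g xs, hprod, map_one]⟩
  · intro hg
    obtain ⟨n, hn, hgn⟩ := isOfFinOrder_iff_pow_eq_one.mp hg
    set m := A.index with hm
    letI := A.fintypeQuotientOfFiniteIndex
    have hmem : ∀ x : G, x * g ^ m * x⁻¹ ∈ A := fun x =>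
      Subgroup.Normal.conj_mem ‹A.Normal› _ (A.pow_index_mem g) x
    have hcomm : ∀ a b : G, a ∈ A → b ∈ A → a * b = b * a := fun a b ha hb =>
      congrArg Subtype.val (mul_comm (⟨a, ha⟩ : ↥A) ⟨b, hb⟩)
    set f : G ⧸ A → ↥A := fun q => ⟨q.out * g ^ m * q.out⁻¹, hmem _⟩ with hf
    have hfx : ∀ x : G, f (QuotientGroup.mk x) = ⟨x * g ^ m * x⁻¹, hmem x⟩ := by
      intro x
      obtain ⟨a, ha⟩ := QuotientGroup.mk_out_eq_mul A x
      apply Subtype.ext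
      show (QuotientGroup.mk x : G ⧸ A).out * g ^ m * (QuotientGroup.mk x : G ⧸ A).out⁻¹
        = x * g ^ m * x⁻¹
      rw [ha, mul_inv_rev, mul_assoc, mul_assoc, ← mul_assoc (a : G),
        hcomm (a : G) (g ^ m) a.2 (A.pow_index_mem g)]
      group
    set b : ↥A := ∏ q : G ⧸ A, f q with hb
    -- b is central
    have hcentral : ∀ y : G, y * (b : G) * y⁻¹ = (b : G) := by
      intro y
      let c : ↥A →* ↥A :=
        { toFun := fun a => ⟨y * (a : G) * y⁻¹, Subgroup.Normal.conj_mem ‹A.Normal› _ a.2 y⟩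
          map_one' := by ext; simp
          map_mul' := fun a b => by ext; simp [mul_assoc] }
      have h1 : ∀ q : G ⧸ A, c (f q) = f (y • q) := by
        intro q
        have : f (y • q) = f (QuotientGroup.mk (y * q.out)) := by
          rw [← MulAction.Quotient.mk_smul_out]
          rfl
        rw [this, hfx]
        apply Subtype.ext
        show y * (q.out * g ^ m * q.out⁻¹) * y⁻¹ = (y * q.out) * g ^ m * (y * q.out)⁻¹
        group
      have h2 : c b = b := by
        rw [hb, map_prod]
        calc (∏ q : G ⧸ A, c (f q)) = ∏ q : G ⧸ A, f (y • q) := by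
              exact Finset.prod_congr rfl fun q _ => h1 q
          _ = ∏ q : G ⧸ A, f q := Equiv.prod_comp (MulAction.toPerm y) f
      exact congrArg Subtype.val h2
    have hbcomm : ∀ y : G, Commute y (b : G) := fun y => by
      have := hcentral y
      rw [mul_inv_eq_iff_eq_mul] at this
      exact this
    -- transfer
    let V : G →* ↥A := MonoidHom.transfer (MonoidHom.id ↥A)
    have hkey : ∀ (k : ℕ) (y : G), y⁻¹ * (b : G) ^ k * y ∈ A →
        y⁻¹ * (b : G) ^ k * y = (b : G) ^ k := fun k y _ => by
      rw [mul_assoc, ← ((hbcomm y).pow_right k).eq, ← mul_assoc, inv_mul_cancel, one_mul]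
    have hVb : V (b : G) = ⟨(b : G) ^ m, MonoidHom.transfer_eq_pow_aux (b : G) hkey⟩ :=
      MonoidHom.transfer_eq_pow (MonoidHom.id ↥A) (b : G) hkey
    -- the witness list
    set ℓ : List (G ⧸ A) := Finset.univ.toList with hl
    set xs : List G := (ℓ.map (fun q => List.replicate m q.out⁻¹)).flatten with hxs
    have hprod : (xs.map (fun x => x⁻¹ * g * x)).prod = (b : G) := by
      rw [hxs, List.map_flatten, List.map_map]
      have e1 : ((List.map (fun x => x⁻¹ * g * x) ∘ fun q : G ⧸ A => List.replicate m q.out⁻¹))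
          = fun q : G ⧸ A => List.replicate m (q.out * g * q.out⁻¹) := by
        funext q
        simp [Function.comp, List.map_replicate]
      rw [e1, List.prod_flatten, List.map_map]
      have e2 : (List.prod ∘ fun q : G ⧸ A => List.replicate m (q.out * g * q.out⁻¹))
          = fun q : G ⧸ A => ((f q : ↥A) : G) := by
        funext q
        simp only [Function.comp, List.prod_replicate, conj_pow]
        rfl
      rw [e2]
      have e3 : (ℓ.map fun q : G ⧸ A => ((f q : ↥A) : G)) = (ℓ.map f).map A.subtype := by
        rw [List.map_map]; rfl
      rw [e3, ← MonoidHom.map_list_prod A.subtype, hl, Finset.prod_map_toList]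
      rfl
    -- abelianization of b
    have hofb : Abelianization.of (b : G) = (Abelianization.of g) ^ xs.length := by
      rw [← hprod, of_prod_conj]
    -- V (b^n) = 1
    have hVbn : (V (b : G)) ^ n = 1 := by
      have : V (b : G) = (Abelianization.lift V) (Abelianization.of (b : G)) := by
        rw [Abelianization.lift_apply_of]
      rw [this, ← map_pow, hofb, ← pow_mul, mul_comm xs.length n, pow_mul, hgn,
        one_pow, map_one]
    -- deduce b^(m*n) = 1 in A
    have hbmn : (b : G) ^ (m * n) = 1 := by
      have h := hVbn
      rw [hVb] at h
      have h2 := congrArg Subtype.val h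
      simpa [pow_mul, SubmonoidClass.coe_pow] using h2
    have hbA : b ^ (m * n) = 1 := by
      apply Subtype.ext
      simpa [SubmonoidClass.coe_pow] using hbmn
    -- torsion-freeness of A
    have hb1 : b = 1 := by
      have h4 : (e b) ^ (m * n) = 1 := by rw [← map_pow, hbA, map_one]
      have h5 : (m * n : ℤ) • Multiplicative.toAdd (e b) = 0 := by
        have := congrArg Multiplicative.toAdd h4
        simpa [toAdd_pow, natCast_zsmul] using this
      have h6 : Multiplicative.toAdd (e b) = 0 := by
        rcases smul_eq_zero.mp h5 with h | h
        · exfalso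
          have : (m : ℤ) * (n : ℤ) = 0 := by exact_mod_cast h
          rcases mul_eq_zero.mp this with h' | h'
          · exact hfin (by exact_mod_cast h')
          · omega
        · exact h
      apply e.injective
      rw [map_one]
      exact Multiplicative.toAdd.injective (by simpa using h6)
    -- nonemptiness of xs
    have hne : xs ≠ [] := by
      apply List.ne_nil_of_mem (a := ((1 : G ⧸ A).out)⁻¹)
      rw [hxs, List.mem_flatten]
      refine ⟨List.replicate m ((1 : G ⧸ A).out)⁻¹, ?_, ?_⟩
      · rw [List.mem_map]
        exact ⟨(1 : G ⧸ A), Finset.mem_toList.mpr (Finset.mem_univ _), rfl⟩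
      · exact List.mem_replicate.mpr ⟨hfin, rfl⟩
    exact ⟨xs, hne, by rw [hprod, hb1]; rfl⟩
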